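/- arXiv:1210.0701 — 7 statements merged into one kernel-verified Lean document; each statement's English description precedes it below -/
import Mathlib

section
/- For fixed r ∈ ℝ and λ > 0, the minimum value over γ ∈ ℝ of (1/2)(r - γ)² + λ|γ| equals Huber's loss: (1/2)r² if |r| ≤ λ, and λ|r| - λ²/2 if |r| > λ. -/
/-- The minimum over `γ` of `(1/2)(r - γ)² + λ|γ|` equals Huber's loss:
`(1/2)r²` if `|r| ≤ lam`, and `λ|r| - λ²/2` otherwise. -/
theorem effective_loss_is_huber (r lam : ℝ) (hlam : 0 < lam) :
    IsLeast {v : ℝ | ∃ γ : ℝ, v = (1/2) * (r - γ)^2 + lam * |γ|}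
      (if |r| ≤ lam then (1/2) * r^2 else lam * |r| - lam^2 / 2) := by
  constructor
  · by_cases h : |r| ≤ lam
    · simp only [h, if_pos]
      exact ⟨0, by simp⟩
    · simp only [h, if_neg, not_false_iff]
      push_neg at h
      rcases le_or_gt 0 r with hr | hr
      · refine ⟨r - lam, ?_⟩
        rw [abs_of_nonneg hr] at h ⊢
        rw [abs_of_nonneg (by linarith)]
        ring
      · refine ⟨r + lam, ?_⟩
        rw [abs_of_neg hr] at h ⊢
        rw [abs_of_neg (by linarith)]
        ring
  · rintro v ⟨γ, rfl⟩
    have h1 : r * γ ≤ |r| * |γ| := le_trans (le_abs_self _) (by rw [abs_mul])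
    have h2 : 0 ≤ |γ| := abs_nonneg _
    have h3 : |r - γ| ≤ |r - γ| := le_refl _
    by_cases h : |r| ≤ lam
    · simp only [h, if_pos]
      nlinarith [sq_nonneg γ, mul_le_mul_of_nonneg_right h h2]
    · simp only [h, if_neg, not_false_iff]
      push_neg at h
      have h4 : |r| ≤ |r - γ| + |γ| := by
        calc |r| = |(r - γ) + γ| := by ring_nf
        _ ≤ |r - γ| + |γ| := abs_add_le _ _
      have h5 : (0:ℝ) ≤ (|r - γ| - lam)^2 := sq_nonneg _
      have h6 : |r - γ|^2 = (r - γ)^2 := sq_abs _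
      nlinarith [mul_le_mul_of_nonneg_left h4 hlam.le]
end

section
/- Let g : ℝ → ℝ be differentiable and strictly convex with minimum at 0, and suppose g'(r) → ±∞ as r → ±∞. Then for any λ > 0 and r ∈ ℝ, the unique minimizer of γ ↦ g(r - γ) + λ|γ| equals r - (g')⁻¹(λ) when r > (g')⁻¹(λ), equals 0 when (g')⁻¹(-λ) ≤ r ≤ (g')⁻¹(λ), and equals r - (g')⁻¹(-λ) when r < (g')⁻¹(-λ). -/
/-- Tangent line inequality for a convex differentiable function on ℝ. -/
lemma tangent_le {g : ℝ → ℝ} (hconv : ConvexOn ℝ Set.univ g) (hg : Differentiable ℝ g)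
    (x y : ℝ) : g x + deriv g x * (y - x) ≤ g y := by
  rcases lt_trichotomy x y with h | h | h
  · have := hconv.deriv_le_slope (Set.mem_univ x) (Set.mem_univ y) h (hg x)
    rw [slope_def_field] at this
    have hxy : (0:ℝ) < y - x := by linarith
    rw [le_div_iff₀ hxy] at this
    nlinarith
  · simp [h]
  · have := hconv.slope_le_deriv (Set.mem_univ y) (Set.mem_univ x) h (hg x)
    rw [slope_def_field] at this
    have hxy : (0:ℝ) < x - y := by linarith
    rw [div_le_iff₀ hxy] at this
    nlinarith

/-- Location-family proposition: for `g` differentiable, strictly convex with minimum at 0,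
with derivative tending to `±∞`, the unique minimizer of `γ ↦ g(r - γ) + λ|γ|` is given by
soft-thresholding relative to `a = (g')⁻¹(λ)` and `b = (g')⁻¹(-λ)`. -/
theorem location_family_minimizer (g : ℝ → ℝ) (lam : ℝ) (hlam : 0 < lam)
    (hg : Differentiable ℝ g)
    (hconv : StrictConvexOn ℝ Set.univ g)
    (hmin : ∀ x : ℝ, g 0 ≤ g x)
    (htop : Filter.Tendsto (deriv g) Filter.atTop Filter.atTop)
    (hbot : Filter.Tendsto (deriv g) Filter.atBot Filter.atBot)
    (a b : ℝ) (ha : deriv g a = lam) (hb : deriv g b = -lam) (r : ℝ) :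
    let γhat := if a < r then r - a else if r < b then r - b else 0
    (∀ γ : ℝ, g (r - γhat) + lam * |γhat| ≤ g (r - γ) + lam * |γ|) ∧
    (∀ γ : ℝ, γ ≠ γhat → g (r - γhat) + lam * |γhat| < g (r - γ) + lam * |γ|) := by
  intro γhat
  have hmono : StrictMono (deriv g) := by
    have := hconv.strictMonoOn_deriv (fun x _ => hg x)
    exact fun x y hxy => this (Set.mem_univ x) (Set.mem_univ y) hxy
  -- nonstrict minimization
  have key : ∀ γ : ℝ, g (r - γhat) + lam * |γhat| ≤ g (r - γ) + lam * |γ| := by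
    intro γ
    have hconv' : ConvexOn ℝ Set.univ g := hconv.convexOn
    show g (r - γhat) + lam * |γhat| ≤ g (r - γ) + lam * |γ|
    unfold γhat
    split_ifs with h1 h2
    · -- a < r, γhat = r - a, r - γhat = a
      have ht := tangent_le hconv' hg a (r - γ)
      rw [ha] at ht
      have habs : γ ≤ |γ| := le_abs_self γ
      have : |r - a| = r - a := abs_of_pos (by linarith)
      rw [show r - (r - a) = a by ring, this]
      nlinarith
    · -- r < b, γhat = r - b
      have ht := tangent_le hconv' hg b (r - γ)
      rw [hb] at ht
      have habs : -γ ≤ |γ| := neg_le_abs γ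
      have : |r - b| = -(r - b) := abs_of_neg (by linarith)
      rw [show r - (r - b) = b by ring, this]
      nlinarith
    · -- b ≤ r ≤ a, γhat = 0
      push_neg at h1 h2
      have ht := tangent_le hconv' hg r (r - γ)
      have hru : deriv g r ≤ lam := by
        rcases eq_or_lt_of_le h1 with h | h
        · rw [h, ha]
        · exact le_of_lt (ha ▸ hmono h)
      have hrl : -lam ≤ deriv g r := by
        rcases eq_or_lt_of_le h2 with h | h
        · rw [← h, hb]
        · exact le_of_lt (hb ▸ hmono h)
      simp only [abs_zero, mul_zero, sub_zero, add_zero]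
      rcases le_or_gt 0 γ with hγ | hγ
      · rw [abs_of_nonneg hγ]; nlinarith
      · rw [abs_of_neg hγ]; nlinarith
  refine ⟨key, fun γ hγ => ?_⟩
  -- strict convexity of the objective
  have hf : StrictConvexOn ℝ Set.univ (fun γ : ℝ => g (r - γ) + lam * |γ|) := by
    have h1 : StrictConvexOn ℝ Set.univ (fun γ : ℝ => g (r - γ)) := by
      refine ⟨convex_univ, fun x _ y _ hxy p q hp hq hpq => ?_⟩
      have h2 := hconv.2 (Set.mem_univ (r - x)) (Set.mem_univ (r - y))
        (by intro h; exact hxy (by linarith)) hp hq hpq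
      simp only [smul_eq_mul] at h2 ⊢
      have e : r - (p * x + q * y) = p * (r - x) + q * (r - y) := by
        linear_combination -r * hpq
      rw [e]; exact h2
    have h2 : ConvexOn ℝ Set.univ (fun γ : ℝ => lam * |γ|) :=
      by
      have := (ConvexOn.smul hlam.le convexOn_univ_norm : ConvexOn ℝ Set.univ fun x : ℝ => lam • ‖x‖)
      simpa [Real.norm_eq_abs, smul_eq_mul] using this
    exact h1.add_convexOn h2
  -- strictness via midpoint
  have hmid := hf.2 (Set.mem_univ γhat) (Set.mem_univ γ) (Ne.symm hγ)
    (by norm_num : (0:ℝ) < 1/2) (by norm_num : (0:ℝ) < 1/2) (by norm_num)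
  have hkm := key ((1/2 : ℝ) • γhat + (1/2 : ℝ) • γ)
  simp only [smul_eq_mul] at hmid hkm
  linarith
end

section
/- Fix q ∈ (0,1) and λ > 0. Let ρ_q(r) = qr for r ≥ 0 and ρ_q(r) = (q-1)r for r < 0 be the check loss, and let J₂(γ) = (q/(1-q))(γ₊)² + ((1-q)/q)(γ₋)² be the asymmetric quadratic penalty, where γ₊ = max(γ,0), γ₋ = max(-γ,0). Then for any r ∈ ℝ, the minimizer of γ ↦ ρ_q(r - γ) + (λ/2)J₂(γ) equals -q/λ if r < -q/λ, equals r if -q/λ ≤ r < (1-q)/λ, and equals (1-q)/λ if r ≥ (1-q)/λ. -/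
/-- The check loss `ρ_q`. -/
noncomputable def checkLoss (q r : ℝ) : ℝ := if 0 ≤ r then q * r else (q - 1) * r

/-- The asymmetric quadratic penalty `J₂`. -/
noncomputable def asymPenalty (q γ : ℝ) : ℝ :=
  (q / (1 - q)) * (max γ 0)^2 + ((1 - q) / q) * (max (-γ) 0)^2

lemma sqpos {x : ℝ} (h : x ≠ 0) : 0 < x ^ 2 := by
  rcases h.lt_or_gt with h | h <;> nlinarith

lemma coreA (q lam r γ t A B : ℝ) (hq0 : 0 < q) (hq1 : q < 1) (hlam : 0 < lam)
    (ht : lam * t = q) (hA : A * (1 - q) = q) (hB : B * q = 1 - q)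
    (hr : r ≤ -t) (hγ : γ ≠ -t) :
    checkLoss q (r - -t) + lam / 2 * (A * (max (-t) 0)^2 + B * (max (- -t) 0)^2) <
    checkLoss q (r - γ) + lam / 2 * (A * (max γ 0)^2 + B * (max (-γ) 0)^2) := by
  have htpos : 0 < t := by
    by_contra h; push_neg at h
    nlinarith [mul_nonpos_of_nonneg_of_nonpos hlam.le h]
  have hApos : 0 < A := by
    by_contra h; push_neg at h
    nlinarith [mul_nonpos_of_nonpos_of_nonneg h (by linarith : (0:ℝ) ≤ 1 - q)]
  have hBpos : 0 < B := by
    by_contra h; push_neg at h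
    nlinarith [mul_nonpos_of_nonpos_of_nonneg h hq0.le]
  have hs : 0 < (γ + t) ^ 2 := sqpos (fun h => hγ (by linarith))
  have e1 : B * (lam * t) = 1 - q := by rw [ht, hB]
  have e2 : B * (lam * t) * γ = (1 - q) * γ := by rw [e1]
  have e3 : B * (lam * t) * t = (1 - q) * t := by rw [e1]
  rw [neg_neg, max_eq_right (by linarith : -t ≤ 0), max_eq_left htpos.le]
  unfold checkLoss
  rcases le_total γ 0 with h0 | h0
  · rw [max_eq_right h0, max_eq_left (by linarith : (0:ℝ) ≤ -γ)]
    split_ifs with h1 h2 h2 <;>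
      nlinarith [mul_pos (mul_pos hlam hBpos) hs, e2, e3, htpos]
  · rw [max_eq_left h0, max_eq_right (by linarith : -γ ≤ 0)]
    have hAg : 0 ≤ lam * A * γ ^ 2 :=
      mul_nonneg (mul_nonneg hlam.le hApos.le) (sq_nonneg γ)
    split_ifs with h1 h2 h2
    · linarith
    · nlinarith [e3, hAg, htpos]
    · linarith
    · nlinarith [e3, hAg, htpos]

lemma coreC (q lam r γ u A B : ℝ) (hq0 : 0 < q) (hq1 : q < 1) (hlam : 0 < lam)
    (hu : lam * u = 1 - q) (hA : A * (1 - q) = q) (hB : B * q = 1 - q)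
    (hr : u ≤ r) (hγ : γ ≠ u) :
    checkLoss q (r - u) + lam / 2 * (A * (max u 0)^2 + B * (max (-u) 0)^2) <
    checkLoss q (r - γ) + lam / 2 * (A * (max γ 0)^2 + B * (max (-γ) 0)^2) := by
  have hupos : 0 < u := by
    by_contra h; push_neg at h
    nlinarith [mul_nonpos_of_nonneg_of_nonpos hlam.le h]
  have hApos : 0 < A := by
    by_contra h; push_neg at h
    nlinarith [mul_nonpos_of_nonpos_of_nonneg h (by linarith : (0:ℝ) ≤ 1 - q)]
  have hBpos : 0 < B := by
    by_contra h; push_neg at h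
    nlinarith [mul_nonpos_of_nonpos_of_nonneg h hq0.le]
  have hs : 0 < (γ - u) ^ 2 := sqpos (sub_ne_zero.2 hγ)
  have f1 : A * (lam * u) = q := by rw [hu, hA]
  have f2 : A * (lam * u) * γ = q * γ := by rw [f1]
  have f3 : A * (lam * u) * u = q * u := by rw [f1]
  rw [max_eq_left hupos.le, max_eq_right (by linarith : -u ≤ 0)]
  unfold checkLoss
  rcases le_total γ 0 with h0 | h0
  · rw [max_eq_right h0, max_eq_left (by linarith : (0:ℝ) ≤ -γ)]
    have hBg : 0 ≤ lam * B * γ ^ 2 :=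
      mul_nonneg (mul_nonneg hlam.le hBpos.le) (sq_nonneg γ)
    split_ifs with h1 h2 h2
    · nlinarith [f3, hBg, hupos]
    · linarith
    · linarith
    · linarith
  · rw [max_eq_left h0, max_eq_right (by linarith : -γ ≤ 0)]
    split_ifs with h1 h2 h2
    · nlinarith [mul_pos (mul_pos hlam hApos) hs, f2, f3]
    · nlinarith [mul_pos (mul_pos hlam hApos) hs, f2, f3]
    · linarith
    · linarith

set_option maxHeartbeats 1000000 in
lemma coreB (q lam r γ t u A B : ℝ) (hq0 : 0 < q) (hq1 : q < 1) (hlam : 0 < lam)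
    (ht : lam * t = q) (hu : lam * u = 1 - q) (hA : A * (1 - q) = q) (hB : B * q = 1 - q)
    (hr1 : -t ≤ r) (hr2 : r ≤ u) (hγ : γ ≠ r) :
    checkLoss q (r - r) + lam / 2 * (A * (max r 0)^2 + B * (max (-r) 0)^2) <
    checkLoss q (r - γ) + lam / 2 * (A * (max γ 0)^2 + B * (max (-γ) 0)^2) := by
  have htpos : 0 < t := by
    by_contra h; push_neg at h
    nlinarith [mul_nonpos_of_nonneg_of_nonpos hlam.le h]
  have hupos : 0 < u := by
    by_contra h; push_neg at h
    nlinarith [mul_nonpos_of_nonneg_of_nonpos hlam.le h]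
  have hApos : 0 < A := by
    by_contra h; push_neg at h
    nlinarith [mul_nonpos_of_nonpos_of_nonneg h (by linarith : (0:ℝ) ≤ 1 - q)]
  have hBpos : 0 < B := by
    by_contra h; push_neg at h
    nlinarith [mul_nonpos_of_nonpos_of_nonneg h hq0.le]
  have hs : 0 < (γ - r) ^ 2 := by
    have : γ - r ≠ 0 := sub_ne_zero.2 hγ
    rcases this.lt_or_gt with h | h <;> nlinarith
  -- A * (lam * r) ≤ q  and  -(1-q) ≤ B * (lam * r)
  have kA : A * (lam * r) ≤ q := by
    have h1 : A * (lam * r) ≤ A * (lam * u) :=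
      mul_le_mul_of_nonneg_left (mul_le_mul_of_nonneg_left hr2 hlam.le) hApos.le
    have h2 : A * (lam * u) = q := by rw [hu, hA]
    linarith
  have kB : -(1 - q) ≤ B * (lam * r) := by
    have h1 : B * (lam * -t) ≤ B * (lam * r) :=
      mul_le_mul_of_nonneg_left (mul_le_mul_of_nonneg_left hr1 hlam.le) hBpos.le
    have h2 : B * (lam * -t) = -(1 - q) := by rw [mul_neg, mul_neg, ht, hB]
    linarith
  rw [sub_self]
  unfold checkLoss
  rw [if_pos (le_refl (0:ℝ))]
  rcases le_total r 0 with hr0 | hr0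
  · rw [max_eq_right hr0, max_eq_left (by linarith : (0:ℝ) ≤ -r)]
    have kB2 : B * (lam * r) ≤ q := by
      have : B * (lam * r) ≤ 0 :=
        mul_nonpos_of_nonneg_of_nonpos hBpos.le
          (mul_nonpos_of_nonneg_of_nonpos hlam.le hr0)
      linarith
    rcases le_total γ 0 with h0 | h0
    · rw [max_eq_right h0, max_eq_left (by linarith : (0:ℝ) ≤ -γ)]
      split_ifs with h2
      · -- γ ≤ r ≤ 0
        nlinarith [mul_pos (mul_pos hlam hBpos) hs,
          mul_nonneg (sub_nonneg.2 kB2) h2]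
      · -- r < γ ≤ 0
        nlinarith [mul_pos (mul_pos hlam hBpos) hs,
          mul_nonneg (by linarith [kB] : (0:ℝ) ≤ (1 - q) + B * (lam * r))
            (by linarith : (0:ℝ) ≤ γ - r)]
    · rw [max_eq_left h0, max_eq_right (by linarith : -γ ≤ 0)]
      split_ifs with h2
      · -- 0 ≤ γ ≤ r ≤ 0 means γ = r = 0? no: γ ≤ r ≤ 0 and γ ≥ 0 → γ = r = 0, contra hγ
        rcases lt_or_ge 0 γ with hc | hc
        · linarith
        · exact absurd (le_antisymm (by linarith) (by linarith) : γ = r) hγ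
      · -- r ≤ 0 < ... r < γ, γ ≥ 0
        nlinarith [mul_nonneg (by linarith [kB] : (0:ℝ) ≤ (1 - q) + B * (lam * r))
            (by linarith : (0:ℝ) ≤ -r),
          mul_nonneg (mul_nonneg hlam.le hApos.le) (sq_nonneg γ),
          mul_pos hq0 hs, sq_nonneg γ]
  · rw [max_eq_left hr0, max_eq_right (by linarith : -r ≤ 0)]
    rcases le_total γ 0 with h0 | h0
    · rw [max_eq_right h0, max_eq_left (by linarith : (0:ℝ) ≤ -γ)]
      split_ifs with h2
      · -- γ ≤ 0 ≤ r
        rcases lt_or_ge γ 0 with hc | hc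
        · nlinarith [mul_nonneg (sub_nonneg.2 kA) hr0,
            mul_nonneg (mul_nonneg hlam.le hBpos.le) (sq_nonneg γ),
            mul_pos hq0 (neg_pos.2 hc)]
        · have hγ0 : γ = 0 := le_antisymm h0 hc
          have hrpos : 0 < r := by
            rcases lt_or_ge 0 r with h | h
            · exact h
            · exact absurd (by linarith : γ = r) hγ
          nlinarith [mul_nonneg (sub_nonneg.2 kA) hr0,
            mul_nonneg (mul_nonneg hlam.le hBpos.le) (sq_nonneg γ),
            mul_pos hq0 hrpos]
      · linarith
    · rw [max_eq_left h0, max_eq_right (by linarith : -γ ≤ 0)]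
      split_ifs with h2
      · -- 0 ≤ γ ≤ r
        nlinarith [mul_pos (mul_pos hlam hApos) hs,
          mul_nonneg (sub_nonneg.2 kA) h2]
      · -- 0 ≤ r < γ
        nlinarith [mul_nonneg (mul_nonneg (mul_nonneg hlam.le hApos.le)
            (by linarith : (0:ℝ) ≤ γ - r)) (by linarith : (0:ℝ) ≤ γ + r)]

/-- The minimizer of `γ ↦ ρ_q(r - γ) + (λ/2)J₂(γ)`. -/
theorem quantile_adjusted_minimizer (q lam r : ℝ) (hq : q ∈ Set.Ioo (0:ℝ) 1)
    (hlam : 0 < lam) :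
    let γhat := if r < -q / lam then -q / lam
      else if r < (1 - q) / lam then r else (1 - q) / lam
    (∀ γ : ℝ, checkLoss q (r - γhat) + (lam / 2) * asymPenalty q γhat ≤
        checkLoss q (r - γ) + (lam / 2) * asymPenalty q γ) ∧
    (∀ γ : ℝ, γ ≠ γhat → checkLoss q (r - γhat) + (lam / 2) * asymPenalty q γhat <
        checkLoss q (r - γ) + (lam / 2) * asymPenalty q γ) := by
  obtain ⟨hq0, hq1⟩ := hq
  have h1q : 0 < 1 - q := by linarith
  intro γhat
  have hg0 : γhat = if r < -q / lam then -q / lam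
      else if r < (1 - q) / lam then r else (1 - q) / lam := rfl
  have ht : lam * (q / lam) = q := by
    rw [mul_comm]; exact div_mul_cancel₀ q hlam.ne'
  have hu : lam * ((1 - q) / lam) = 1 - q := by
    rw [mul_comm]; exact div_mul_cancel₀ _ hlam.ne'
  have hA : (q / (1 - q)) * (1 - q) = q := div_mul_cancel₀ q h1q.ne'
  have hB : ((1 - q) / q) * q = 1 - q := div_mul_cancel₀ _ hq0.ne'
  have hneg : -q / lam = -(q / lam) := by ring
  have key : ∀ γ : ℝ, γ ≠ γhat →
      checkLoss q (r - γhat) + (lam / 2) * asymPenalty q γhat <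
      checkLoss q (r - γ) + (lam / 2) * asymPenalty q γ := by
    intro γ hγ
    by_cases h1 : r < -q / lam
    · rw [hg0, if_pos h1, hneg] at hγ ⊢
      unfold asymPenalty
      exact coreA q lam r γ (q / lam) _ _ hq0 hq1 hlam ht hA hB
        (by rw [hneg] at h1; linarith) hγ
    · by_cases h2 : r < (1 - q) / lam
      · rw [hg0, if_neg h1, if_pos h2] at hγ ⊢
        unfold asymPenalty
        exact coreB q lam r γ (q / lam) ((1 - q) / lam) _ _ hq0 hq1 hlam ht hu hA hB
          (by rw [hneg] at h1; push_neg at h1; linarith) h2.le hγ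
      · rw [hg0, if_neg h1, if_neg h2] at hγ ⊢
        unfold asymPenalty
        exact coreC q lam r γ ((1 - q) / lam) _ _ hq0 hq1 hlam hu hA hB
          (by push_neg at h2; exact h2) hγ
  refine ⟨fun γ => ?_, key⟩
  rcases eq_or_ne γ γhat with h | h
  · rw [h]
  · exact (key γ h).le
end

section
/- Fix q ∈ (0,1) and λ > 0, with check loss ρ_q and asymmetric penalty J₂ as above. The effective loss ρ_q^γ(r) := min_γ { ρ_q(r - γ) + (λ/2)J₂(γ) } equals: (q-1)r - q(1-q)/(2λ) for r < -q/λ; (λ/2)·((1-q)/q)·r² for -q/λ ≤ r < 0; (λ/2)·(q/(1-q))·r² for 0 ≤ r < (1-q)/λ; and qr - q(1-q)/(2λ) for r ≥ (1-q)/λ. -/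
/-- The effective quantile loss obtained by profiling out `γ`. -/
noncomputable def effCheckLoss (q lam r : ℝ) : ℝ :=
  if r < -q / lam then (q - 1) * r - q * (1 - q) / (2 * lam)
  else if r < 0 then (lam / 2) * ((1 - q) / q) * r^2
  else if r < (1 - q) / lam then (lam / 2) * (q / (1 - q)) * r^2
  else q * r - q * (1 - q) / (2 * lam)

set_option maxHeartbeats 1000000 in
lemma eff_lb (q lam r : ℝ) (hq0 : 0 < q) (hq1 : q < 1) (hlam : 0 < lam) (γ : ℝ) :
    effCheckLoss q lam r ≤ checkLoss q (r - γ) + (lam / 2) * asymPenalty q γ := by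
  have h1 : 0 < 1 - q := by linarith
  have hc : (0:ℝ) < 2*lam*q*(1-q) := by positivity
  unfold effCheckLoss checkLoss asymPenalty
  rcases le_or_gt γ 0 with hγ | hγ
  · rw [max_eq_right hγ, max_eq_left (by linarith : (0:ℝ) ≤ -γ)]
    rcases lt_or_ge r (-q/lam) with hr | hr
    · have hr1 : r * lam < -q := (lt_div_iff₀ hlam).mp hr
      rw [if_pos hr]
      rcases le_or_gt 0 (r - γ) with hs | hs
      · rw [if_pos hs]
        have key : (q * (r - γ) + lam / 2 * (q / (1 - q) * 0 ^ 2 + (1 - q) / q * (-γ) ^ 2)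
            - ((q - 1) * r - q * (1 - q) / (2 * lam))) * (2*lam*q*(1-q)) =
            ((1-q)*(lam*γ+q))^2 + (2*lam*q*(1-q))*(r-γ) := by
          field_simp; ring
        nlinarith [key, hc, sq_nonneg ((1-q)*(lam*γ+q)), mul_nonneg hc.le hs]
      · rw [if_neg (not_le.mpr hs)]
        have key : ((q - 1) * (r - γ) + lam / 2 * (q / (1 - q) * 0 ^ 2 + (1 - q) / q * (-γ) ^ 2)
            - ((q - 1) * r - q * (1 - q) / (2 * lam))) * (2*lam*q*(1-q)) =
            ((1-q)*(lam*γ+q))^2 := by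
          field_simp; ring
        nlinarith [key, hc, sq_nonneg ((1-q)*(lam*γ+q))]
    · have hr1 : -q ≤ r * lam := by
        have := (div_le_iff₀ hlam).mp hr; linarith
      rw [if_neg (not_lt.mpr hr)]
      rcases lt_or_ge r 0 with hr2 | hr2
      · rw [if_pos hr2]
        rcases le_or_gt 0 (r - γ) with hs | hs
        · rw [if_pos hs]
          have key : (q * (r - γ) + lam / 2 * (q / (1 - q) * 0 ^ 2 + (1 - q) / q * (-γ) ^ 2)
              - (lam / 2 * ((1 - q) / q) * r ^ 2)) * (2*lam*q*(1-q)) =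
              2*lam*q^2*(1-q)*(r-γ) + lam^2*(1-q)^2*((r-γ)*(-γ-r)) := by
            field_simp; ring
          nlinarith [key, hc,
            mul_nonneg (by positivity : (0:ℝ) ≤ lam^2*(1-q)^2) (mul_nonneg hs (by linarith : (0:ℝ) ≤ -γ - r)),
            mul_nonneg (by positivity : (0:ℝ) ≤ 2*lam*q^2*(1-q)) hs]
        · rw [if_neg (not_le.mpr hs)]
          have key : ((q - 1) * (r - γ) + lam / 2 * (q / (1 - q) * 0 ^ 2 + (1 - q) / q * (-γ) ^ 2)
              - (lam / 2 * ((1 - q) / q) * r ^ 2)) * (2*lam*q*(1-q)) =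
              2*(lam*(1-q)^2*((γ-r)*(r*lam+q))) + (lam*(1-q)*(γ-r))^2 := by
            field_simp; ring
          nlinarith [key, hc, sq_nonneg (lam*(1-q)*(γ-r)),
            mul_nonneg (by positivity : (0:ℝ) ≤ lam*(1-q)^2)
              (mul_nonneg (by linarith : (0:ℝ) ≤ γ - r) (by linarith : (0:ℝ) ≤ r*lam + q))]
      · rw [if_neg (not_lt.mpr hr2)]
        rcases lt_or_ge r ((1-q)/lam) with hr3 | hr3
        · have hr3' : r * lam < 1 - q := (lt_div_iff₀ hlam).mp hr3
          rw [if_pos hr3]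
          rcases le_or_gt 0 (r - γ) with hs | hs
          · rw [if_pos hs]
            have key : (q * (r - γ) + lam / 2 * (q / (1 - q) * 0 ^ 2 + (1 - q) / q * (-γ) ^ 2)
                - (lam / 2 * (q / (1 - q)) * r ^ 2)) * (2*lam*q*(1-q)) =
                2*lam*q^2*(1-q)*(-γ) + (lam*(1-q)*γ)^2 + lam*q^2*(r*((1-q)-r*lam)) + lam*q^2*(1-q)*r := by
              field_simp; ring
            nlinarith [key, hc, sq_nonneg (lam*(1-q)*γ),
              mul_nonneg (by positivity : (0:ℝ) ≤ 2*lam*q^2*(1-q)) (by linarith : (0:ℝ) ≤ -γ),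
              mul_nonneg (by positivity : (0:ℝ) ≤ lam*q^2) (mul_nonneg hr2 (by linarith : (0:ℝ) ≤ (1-q) - r*lam)),
              mul_nonneg (by positivity : (0:ℝ) ≤ lam*q^2*(1-q)) hr2]
          · exact absurd (by linarith : (0:ℝ) ≤ r - γ) (not_le.mpr hs)
        · have hr3' : 1 - q ≤ r * lam := by
            have := (div_le_iff₀ hlam).mp hr3; linarith
          rw [if_neg (not_lt.mpr hr3)]
          rcases le_or_gt 0 (r - γ) with hs | hs
          · rw [if_pos hs]
            have key : (q * (r - γ) + lam / 2 * (q / (1 - q) * 0 ^ 2 + (1 - q) / q * (-γ) ^ 2)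
                - (q * r - q * (1 - q) / (2 * lam))) * (2*lam*q*(1-q)) =
                2*lam*q^2*(1-q)*(-γ) + (lam*(1-q)*γ)^2 + (q*(1-q))^2 := by
              field_simp; ring
            nlinarith [key, hc, sq_nonneg (lam*(1-q)*γ), sq_nonneg (q*(1-q)),
              mul_nonneg (by positivity : (0:ℝ) ≤ 2*lam*q^2*(1-q)) (by linarith : (0:ℝ) ≤ -γ)]
          · exact absurd (by nlinarith [mul_pos hlam hq0] : (0:ℝ) ≤ r - γ) (not_le.mpr hs)
  · rw [max_eq_left hγ.le, max_eq_right (by linarith : -γ ≤ 0)]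
    rcases lt_or_ge r (-q/lam) with hr | hr
    · have hr1 : r * lam < -q := (lt_div_iff₀ hlam).mp hr
      rw [if_pos hr]
      rcases le_or_gt 0 (r - γ) with hs | hs
      · have hrpos : 0 < r := by linarith
        exact absurd hr1 (by nlinarith [mul_pos hlam hrpos])
      · rw [if_neg (not_le.mpr hs)]
        have key : ((q - 1) * (r - γ) + lam / 2 * (q / (1 - q) * γ ^ 2 + (1 - q) / q * 0 ^ 2)
            - ((q - 1) * r - q * (1 - q) / (2 * lam))) * (2*lam*q*(1-q)) =
            2*lam*q*(1-q)^2*γ + (lam*q*γ)^2 + (q*(1-q))^2 := by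
          field_simp; ring
        nlinarith [key, hc, sq_nonneg (lam*q*γ), sq_nonneg (q*(1-q)),
          mul_nonneg (by positivity : (0:ℝ) ≤ 2*lam*q*(1-q)^2) hγ.le]
    · have hr1 : -q ≤ r * lam := by
        have := (div_le_iff₀ hlam).mp hr; linarith
      rw [if_neg (not_lt.mpr hr)]
      rcases lt_or_ge r 0 with hr2 | hr2
      · rw [if_pos hr2]
        rcases le_or_gt 0 (r - γ) with hs | hs
        · exact absurd (by linarith : r - γ < 0) (not_lt.mpr hs)
        · rw [if_neg (not_le.mpr hs)]
          have key : ((q - 1) * (r - γ) + lam / 2 * (q / (1 - q) * γ ^ 2 + (1 - q) / q * 0 ^ 2)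
              - (lam / 2 * ((1 - q) / q) * r ^ 2)) * (2*lam*q*(1-q)) =
              2*lam*q*(1-q)^2*γ + (lam*q*γ)^2 + lam*(1-q)^2*((-r)*q) + lam*(1-q)^2*((-r)*(q+r*lam)) := by
            field_simp; ring
          nlinarith [key, hc, sq_nonneg (lam*q*γ),
            mul_nonneg (by positivity : (0:ℝ) ≤ 2*lam*q*(1-q)^2) hγ.le,
            mul_nonneg (by positivity : (0:ℝ) ≤ lam*(1-q)^2) (mul_nonneg (by linarith : (0:ℝ) ≤ -r) hq0.le),
            mul_nonneg (by positivity : (0:ℝ) ≤ lam*(1-q)^2) (mul_nonneg (by linarith : (0:ℝ) ≤ -r) (by linarith : (0:ℝ) ≤ q + r*lam))]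
      · rw [if_neg (not_lt.mpr hr2)]
        rcases lt_or_ge r ((1-q)/lam) with hr3 | hr3
        · have hr3' : r * lam < 1 - q := (lt_div_iff₀ hlam).mp hr3
          rw [if_pos hr3]
          rcases le_or_gt 0 (r - γ) with hs | hs
          · rw [if_pos hs]
            have key : (q * (r - γ) + lam / 2 * (q / (1 - q) * γ ^ 2 + (1 - q) / q * 0 ^ 2)
                - (lam / 2 * (q / (1 - q)) * r ^ 2)) * (2*lam*q*(1-q)) =
                2*lam*q^2*((r-γ)*((1-q)-r*lam)) + (lam*q*(r-γ))^2 := by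
              field_simp; ring
            nlinarith [key, hc, sq_nonneg (lam*q*(r-γ)),
              mul_nonneg (by positivity : (0:ℝ) ≤ 2*lam*q^2)
                (mul_nonneg hs (by linarith : (0:ℝ) ≤ (1-q) - r*lam))]
          · rw [if_neg (not_le.mpr hs)]
            have key : ((q - 1) * (r - γ) + lam / 2 * (q / (1 - q) * γ ^ 2 + (1 - q) / q * 0 ^ 2)
                - (lam / 2 * (q / (1 - q)) * r ^ 2)) * (2*lam*q*(1-q)) =
                2*lam*q*(1-q)^2*(γ-r) + (lam*q)^2*((γ-r)*(γ+r)) := by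
              field_simp; ring
            nlinarith [key, hc,
              mul_nonneg (by positivity : (0:ℝ) ≤ 2*lam*q*(1-q)^2) (by linarith : (0:ℝ) ≤ γ - r),
              mul_nonneg (by positivity : (0:ℝ) ≤ (lam*q)^2)
                (mul_nonneg (by linarith : (0:ℝ) ≤ γ - r) (by linarith : (0:ℝ) ≤ γ + r))]
        · have hr3' : 1 - q ≤ r * lam := by
            have := (div_le_iff₀ hlam).mp hr3; linarith
          rw [if_neg (not_lt.mpr hr3)]
          rcases le_or_gt 0 (r - γ) with hs | hs
          · rw [if_pos hs]
            have key : (q * (r - γ) + lam / 2 * (q / (1 - q) * γ ^ 2 + (1 - q) / q * 0 ^ 2)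
                - (q * r - q * (1 - q) / (2 * lam))) * (2*lam*q*(1-q)) =
                (q*(lam*γ-(1-q)))^2 := by
              field_simp; ring
            nlinarith [key, hc, sq_nonneg (q*(lam*γ-(1-q)))]
          · rw [if_neg (not_le.mpr hs)]
            have key : ((q - 1) * (r - γ) + lam / 2 * (q / (1 - q) * γ ^ 2 + (1 - q) / q * 0 ^ 2)
                - (q * r - q * (1 - q) / (2 * lam))) * (2*lam*q*(1-q)) =
                (q*(lam*γ-(1-q)))^2 + (2*lam*q*(1-q))*(γ-r) := by
              field_simp; ring
            nlinarith [key, hc, sq_nonneg (q*(lam*γ-(1-q))),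
              mul_nonneg hc.le (by linarith : (0:ℝ) ≤ γ - r)]

lemma eff_mem (q lam r : ℝ) (hq0 : 0 < q) (hq1 : q < 1) (hlam : 0 < lam) :
    ∃ γ : ℝ, effCheckLoss q lam r = checkLoss q (r - γ) + (lam / 2) * asymPenalty q γ := by
  have h1 : 0 < 1 - q := by linarith
  rcases lt_or_ge r (-q/lam) with hr | hr
  · refine ⟨-q/lam, ?_⟩
    have h2 : r - (-q/lam) < 0 := by linarith
    have h3 : -q/lam ≤ 0 := by
      rw [div_nonpos_iff]; right; exact ⟨by linarith, hlam.le⟩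
    rw [effCheckLoss, if_pos hr, checkLoss, if_neg (not_le.mpr h2), asymPenalty,
      max_eq_right h3, max_eq_left (by linarith : (0:ℝ) ≤ -(-q/lam))]
    field_simp
    ring
  · rw [effCheckLoss, if_neg (not_lt.mpr hr)]
    rcases lt_or_ge r 0 with hr2 | hr2
    · refine ⟨r, ?_⟩
      rw [if_pos hr2, checkLoss, sub_self, if_pos le_rfl, asymPenalty,
        max_eq_right hr2.le, max_eq_left (by linarith : (0:ℝ) ≤ -r)]
      ring
    · rw [if_neg (not_lt.mpr hr2)]
      rcases lt_or_ge r ((1-q)/lam) with hr3 | hr3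
      · refine ⟨r, ?_⟩
        rw [if_pos hr3, checkLoss, sub_self, if_pos le_rfl, asymPenalty,
          max_eq_left hr2, max_eq_right (by linarith : -r ≤ 0)]
        ring
      · refine ⟨(1-q)/lam, ?_⟩
        have h2 : 0 ≤ r - (1-q)/lam := by linarith
        have h3 : 0 ≤ (1-q)/lam := by positivity
        rw [if_neg (not_lt.mpr hr3), checkLoss, if_pos h2, asymPenalty,
          max_eq_left h3, max_eq_right (by linarith : -((1-q)/lam) ≤ 0)]
        field_simp
        ring

/-- The minimum of `γ ↦ ρ_q(r - γ) + (λ/2)J₂(γ)` equals the effective quantile loss. -/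
theorem quantile_effective_loss (q lam r : ℝ) (hq : q ∈ Set.Ioo (0:ℝ) 1)
    (hlam : 0 < lam) :
    IsLeast {v : ℝ | ∃ γ : ℝ, v = checkLoss q (r - γ) + (lam / 2) * asymPenalty q γ}
      (effCheckLoss q lam r) := by
  obtain ⟨hq0, hq1⟩ := hq
  constructor
  · exact eff_mem q lam r hq0 hq1 hlam
  · rintro v ⟨γ, rfl⟩
    exact eff_lb q lam r hq0 hq1 hlam γ
end

section
/- Let U be a real random variable with q-th quantile 0 whose density is constant on the interval [-q/λ, (1-q)/λ] (for some q ∈ (0,1), λ > 0). Then E[ψ_q^γ(U)] = 0, where ψ_q^γ is the derivative of the effective quantile loss; i.e., the quantile remains the zero of the effective ψ-function. -/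
open MeasureTheory

/-- The derivative `ψ_q^γ` of the effective quantile loss. -/
noncomputable def effCheckPsi (q lam r : ℝ) : ℝ :=
  if r < -q / lam then q - 1
  else if r < 0 then lam * ((1 - q) / q) * r
  else if r < (1 - q) / lam then lam * (q / (1 - q)) * r
  else q

/-- If `U` has a density that is constant on `[-q/λ, (1-q)/λ]` and `q`-th quantile `0`
(`P(U < 0) = q`), then `E[ψ_q^γ(U)] = 0`. -/
theorem effective_psi_zero_at_quantile (q lam : ℝ) (hq : q ∈ Set.Ioo (0:ℝ) 1)
    (hlam : 0 < lam) (f : ℝ → ℝ) (hf : ∀ x, 0 ≤ f x)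
    (μ : Measure ℝ)
    (hμ : μ = MeasureTheory.volume.withDensity (fun x => ENNReal.ofReal (f x)))
    (hprob : IsProbabilityMeasure μ)
    (c : ℝ) (hconst : ∀ x ∈ Set.Icc (-q / lam) ((1 - q) / lam), f x = c)
    (hquant : μ {x : ℝ | x < 0} = ENNReal.ofReal q) :
    ∫ x, effCheckPsi q lam x ∂μ = 0 := by
  obtain ⟨hq0, hq1⟩ := hq
  set a : ℝ := q / lam with ha_def
  set b : ℝ := (1 - q) / lam with hb_def
  have hneg : -q / lam = -a := by rw [neg_div]
  have ha : 0 < a := div_pos hq0 hlam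
  have hb : 0 < b := div_pos (by linarith) hlam
  have hIcc : Set.Icc (-q / lam) ((1 - q) / lam) = Set.Icc (-a) b := by rw [hneg]
  have hconst' : ∀ x ∈ Set.Icc (-a) b, f x = c := by rw [← hIcc]; exact hconst
  have hc0 : 0 ≤ c := by
    rw [← hconst' 0 ⟨by linarith, le_of_lt hb⟩]; exact hf 0
  -- the four pieces
  set s₁ : Set ℝ := Set.Iio (-a) with hs₁_def
  set s₂ : Set ℝ := Set.Ico (-a) 0 with hs₂_def
  set s₃ : Set ℝ := Set.Ico 0 b with hs₃_def
  set s₄ : Set ℝ := Set.Ici b with hs₄_def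
  have hm₁ : MeasurableSet s₁ := measurableSet_Iio
  have hm₂ : MeasurableSet s₂ := measurableSet_Ico
  have hm₃ : MeasurableSet s₃ := measurableSet_Ico
  have hm₄ : MeasurableSet s₄ := measurableSet_Ici
  -- on subsets of the interval the restriction of μ is a constant multiple of volume
  have key : ∀ s : Set ℝ, MeasurableSet s → s ⊆ Set.Icc (-a) b →
      μ.restrict s = ENNReal.ofReal c • volume.restrict s := by
    intro s hs hsub
    rw [hμ, restrict_withDensity hs]
    have hae : (fun x => ENNReal.ofReal (f x)) =ᵐ[volume.restrict s]
        fun _ => ENNReal.ofReal c := by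
      filter_upwards [ae_restrict_mem hs] with x hx
      rw [hconst' x (hsub hx)]
    rw [withDensity_congr_ae hae, withDensity_const]
  have hsub₂ : s₂ ⊆ Set.Icc (-a) b :=
    fun x hx => ⟨hx.1, le_trans (le_of_lt hx.2) (le_of_lt hb)⟩
  have hsub₃ : s₃ ⊆ Set.Icc (-a) b :=
    fun x hx => ⟨le_trans (by linarith : -a ≤ 0) hx.1, le_of_lt hx.2⟩
  have key₂ := key s₂ hm₂ hsub₂
  have key₃ := key s₃ hm₃ hsub₃
  -- measures of the middle pieces
  have hμs₂ : μ s₂ = ENNReal.ofReal c * ENNReal.ofReal a := by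
    rw [← Measure.restrict_apply_univ, key₂]
    simp [hs₂_def, Real.volume_Ico]
  have hμs₃ : μ s₃ = ENNReal.ofReal c * ENNReal.ofReal b := by
    rw [← Measure.restrict_apply_univ, key₃]
    simp [hs₃_def, Real.volume_Ico]
  have hfin : ∀ s : Set ℝ, μ s ≠ ⊤ := fun s => measure_ne_top μ s
  have hmB : (μ s₂).toReal = c * a := by
    rw [hμs₂, ENNReal.toReal_mul, ENNReal.toReal_ofReal hc0,
      ENNReal.toReal_ofReal (le_of_lt ha)]
  have hmC : (μ s₃).toReal = c * b := by
    rw [hμs₃, ENNReal.toReal_mul, ENNReal.toReal_ofReal hc0,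
      ENNReal.toReal_ofReal (le_of_lt hb)]
  -- μ (Iio 0) = q
  have hIio0 : μ (Set.Iio (0:ℝ)) = ENNReal.ofReal q := hquant
  have hsplit0 : s₁ ∪ s₂ = Set.Iio (0:ℝ) := Set.Iio_union_Ico_eq_Iio (by linarith)
  have hd₁₂ : Disjoint s₁ s₂ := by
    simp only [Set.disjoint_left, hs₁_def, hs₂_def, Set.mem_Iio, Set.mem_Ico]
    intro x hx hx2; linarith [hx2.1]
  have hmA : (μ s₁).toReal = q - c * a := by
    have h1 : μ s₁ + μ s₂ = ENNReal.ofReal q := by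
      rw [← measure_union hd₁₂ hm₂, hsplit0, hIio0]
    have h2 : (μ s₁).toReal + (μ s₂).toReal = q := by
      rw [← ENNReal.toReal_add (hfin s₁) (hfin s₂), h1,
        ENNReal.toReal_ofReal (le_of_lt hq0)]
    linarith [hmB, h2]
  -- disjointness and total mass 1
  have huniv : s₁ ∪ (s₂ ∪ (s₃ ∪ s₄)) = Set.univ := by
    rw [hs₃_def, hs₄_def, Set.Ico_union_Ici_eq_Ici (le_of_lt hb), hs₂_def,
      Set.Ico_union_Ici_eq_Ici (by linarith : -a ≤ (0:ℝ)), hs₁_def, Set.Iio_union_Ici]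
  have hd₃₄ : Disjoint s₃ s₄ := by
    simp only [Set.disjoint_left, hs₃_def, hs₄_def, Set.mem_Ici, Set.mem_Ico]
    intro x hx hx2; linarith [hx.2]
  have hd₂₃₄ : Disjoint s₂ (s₃ ∪ s₄) := by
    simp only [Set.disjoint_left, hs₂_def, hs₃_def, hs₄_def, Set.mem_Ico,
      Set.mem_union, Set.mem_Ici]
    rintro x hx (h | h)
    · linarith [hx.2, h.1]
    · linarith [hx.2]
  have hd₁rest : Disjoint s₁ (s₂ ∪ (s₃ ∪ s₄)) := by
    simp only [Set.disjoint_left, hs₁_def, hs₂_def, hs₃_def, hs₄_def, Set.mem_Iio,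
      Set.mem_union, Set.mem_Ico, Set.mem_Ici]
    rintro x hx (h | h | h)
    · linarith [h.1]
    · linarith [h.1]
    · linarith
  have hmD : (μ s₄).toReal = 1 - q - c * b := by
    have h1 : μ s₁ + (μ s₂ + (μ s₃ + μ s₄)) = 1 := by
      rw [← measure_union hd₃₄ hm₄, ← measure_union hd₂₃₄ (hm₃.union hm₄),
        ← measure_union hd₁rest (hm₂.union (hm₃.union hm₄)), huniv]
      exact measure_univ
    have h2 : (μ s₁).toReal + ((μ s₂).toReal + ((μ s₃).toReal + (μ s₄).toReal)) = 1 := by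
      rw [← ENNReal.toReal_add (hfin s₃) (hfin s₄),
        ← ENNReal.toReal_add (hfin s₂) (by finiteness),
        ← ENNReal.toReal_add (hfin s₁) (by finiteness), h1]
      simp
    linarith [hmA, hmB, hmC, h2]
  -- the values of ψ on each piece
  have hψ₁ : Set.EqOn (fun x => effCheckPsi q lam x) (fun _ => q - 1) s₁ := by
    intro x hx
    simp only [effCheckPsi, hneg, if_pos (show x < -a from hx)]
  have hψ₂ : Set.EqOn (fun x => effCheckPsi q lam x)
      (fun x => lam * ((1 - q) / q) * x) s₂ := by
    intro x hx
    simp only [effCheckPsi, hneg, if_neg (not_lt.mpr hx.1), if_pos hx.2]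
  have hψ₃ : Set.EqOn (fun x => effCheckPsi q lam x)
      (fun x => lam * (q / (1 - q)) * x) s₃ := by
    intro x hx
    have h1 : ¬ x < -a := not_lt.mpr (by linarith [hx.1])
    simp only [effCheckPsi, hneg, if_neg h1, if_neg (not_lt.mpr hx.1),
      if_pos (show x < (1 - q) / lam from hx.2)]
  have hψ₄ : Set.EqOn (fun x => effCheckPsi q lam x) (fun _ => q) s₄ := by
    intro x hx
    have hxb : b ≤ x := hx
    have h1 : ¬ x < -a := not_lt.mpr (by linarith)
    have h2 : ¬ x < 0 := not_lt.mpr (by linarith)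
    have h3 : ¬ x < b := not_lt.mpr hxb
    simp only [effCheckPsi, hneg, if_neg h1, if_neg h2, if_neg (show ¬ x < (1 - q) / lam from h3)]
  -- integrability
  have hlin : ∀ (k : ℝ) (s : Set ℝ), MeasurableSet s → s ⊆ Set.Icc (-a) b →
      IntegrableOn (fun x => k * x) s μ := by
    intro k s hs hsub
    unfold IntegrableOn
    rw [key s hs hsub]
    refine Integrable.smul_measure ?_ ENNReal.ofReal_ne_top
    exact ((continuous_const.mul continuous_id).continuousOn.integrableOn_compact
      isCompact_Icc).mono_set hsub
  have hint₁ : IntegrableOn (fun x => effCheckPsi q lam x) s₁ μ :=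
    ((integrableOn_const (measure_ne_top μ s₁))).congr_fun hψ₁.symm hm₁
  have hint₂ : IntegrableOn (fun x => effCheckPsi q lam x) s₂ μ :=
    (hlin _ s₂ hm₂ hsub₂).congr_fun hψ₂.symm hm₂
  have hint₃ : IntegrableOn (fun x => effCheckPsi q lam x) s₃ μ :=
    (hlin _ s₃ hm₃ hsub₃).congr_fun hψ₃.symm hm₃
  have hint₄ : IntegrableOn (fun x => effCheckPsi q lam x) s₄ μ :=
    ((integrableOn_const (measure_ne_top μ s₄))).congr_fun hψ₄.symm hm₄
  -- split the integral
  have hsplit : ∫ x, effCheckPsi q lam x ∂μ =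
      (∫ x in s₁, effCheckPsi q lam x ∂μ) + ((∫ x in s₂, effCheckPsi q lam x ∂μ) +
        ((∫ x in s₃, effCheckPsi q lam x ∂μ) + (∫ x in s₄, effCheckPsi q lam x ∂μ))) := by
    rw [← setIntegral_univ, ← huniv,
      setIntegral_union hd₁rest (hm₂.union (hm₃.union hm₄)) hint₁
        ((hint₂.union (hint₃.union hint₄))),
      setIntegral_union hd₂₃₄ (hm₃.union hm₄) hint₂ (hint₃.union hint₄),
      setIntegral_union hd₃₄ hm₄ hint₃ hint₄]
  -- compute each piece
  have hI₁ : ∫ x in s₁, effCheckPsi q lam x ∂μ = (q - c * a) * (q - 1) := by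
    rw [setIntegral_congr_fun hm₁ hψ₁, setIntegral_const, measureReal_def, hmA, smul_eq_mul]
  have hI₄ : ∫ x in s₄, effCheckPsi q lam x ∂μ = (1 - q - c * b) * q := by
    rw [setIntegral_congr_fun hm₄ hψ₄, setIntegral_const, measureReal_def, hmD, smul_eq_mul]
  have hvol₂ : ∫ x in s₂, x ∂volume = (0 - a ^ 2) / 2 := by
    rw [hs₂_def, integral_Ico_eq_integral_Ioo, ← integral_Ioc_eq_integral_Ioo,
      ← intervalIntegral.integral_of_le (by linarith : -a ≤ (0:ℝ)),
      integral_id]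
    ring
  have hvol₃ : ∫ x in s₃, x ∂volume = b ^ 2 / 2 := by
    rw [hs₃_def, integral_Ico_eq_integral_Ioo, ← integral_Ioc_eq_integral_Ioo,
      ← intervalIntegral.integral_of_le (le_of_lt hb),
      integral_id]
    ring
  have hI₂ : ∫ x in s₂, effCheckPsi q lam x ∂μ =
      c * (lam * ((1 - q) / q) * ((0 - a ^ 2) / 2)) := by
    rw [setIntegral_congr_fun hm₂ hψ₂, key₂, integral_smul_measure,
      ENNReal.toReal_ofReal hc0, integral_const_mul, hvol₂, smul_eq_mul]
  have hI₃ : ∫ x in s₃, effCheckPsi q lam x ∂μ =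
      c * (lam * (q / (1 - q)) * (b ^ 2 / 2)) := by
    rw [setIntegral_congr_fun hm₃ hψ₃, key₃, integral_smul_measure,
      ENNReal.toReal_ofReal hc0, integral_const_mul, hvol₃, smul_eq_mul]
  have h1q : (1:ℝ) - q ≠ 0 := by linarith
  have hqne : q ≠ 0 := ne_of_gt hq0
  have hlne : lam ≠ 0 := ne_of_gt hlam
  rw [hsplit, hI₁, hI₂, hI₃, hI₄, ha_def, hb_def]
  field_simp
  ring
end

section
/- For the logistic loss g(τ) = log(1 + e^{-τ}) and 0 < λ < 1, the minimizer over γ ≥ 0 of γ ↦ log(1 + e^{-τ-γ}) + λγ equals log((1-λ)/λ) - τ if τ ≤ log((1-λ)/λ), and 0 otherwise; consequently the γ-adjusted loss equals the truncated deviance log(1 + λ/(1-λ)) when τ ≤ log((1-λ)/λ) and log(1 + e^{-τ}) otherwise. -/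
lemma key_ineq (a γ : ℝ) (ha : 0 < a) :
    (1 + a) * Real.exp (-(a / (1 + a)) * γ) ≤ 1 + a * Real.exp (-γ) := by
  have h1a : (0:ℝ) < 1 + a := by linarith
  have hθ : (0:ℝ) ≤ a / (1 + a) := by positivity
  have hθ' : (0:ℝ) ≤ 1 / (1 + a) := by positivity
  have hsum : a / (1 + a) + 1 / (1 + a) = 1 := by field_simp; ring
  have hc := convexOn_exp.2 (Set.mem_univ (-γ)) (Set.mem_univ (0:ℝ)) hθ hθ' hsum
  simp only [smul_eq_mul, mul_zero, add_zero, Real.exp_zero, mul_one] at hc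
  have h2 := mul_le_mul_of_nonneg_left hc h1a.le
  calc (1+a) * Real.exp (-(a/(1+a)) * γ) = (1+a) * Real.exp (a/(1+a) * -γ) := by ring_nf
    _ ≤ (1+a) * (a/(1+a) * Real.exp (-γ) + 1/(1+a)) := h2
    _ = 1 + a * Real.exp (-γ) := by field_simp; ring

lemma key_log (a γ : ℝ) (ha : 0 < a) :
    Real.log (1 + a) - a / (1 + a) * γ ≤ Real.log (1 + a * Real.exp (-γ)) := by
  have h1a : (0:ℝ) < 1 + a := by linarith
  have hpos : (0:ℝ) < (1 + a) * Real.exp (-(a / (1 + a)) * γ) := by positivity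
  have := Real.log_le_log hpos (key_ineq a γ ha)
  rwa [Real.log_mul (by positivity) (Real.exp_ne_zero _), Real.log_exp,
    neg_mul, ← sub_eq_add_neg] at this

/-- For the logistic loss, the minimizer over `γ ≥ 0` of
`γ ↦ log(1 + e^{-τ-γ}) + λγ` is `log((1-λ)/λ) - τ` if `τ ≤ log((1-λ)/λ)` and `0`
otherwise, and the `γ`-adjusted loss is the truncated deviance. -/
theorem logistic_adjusted_loss (lam τ : ℝ) (hlam : 0 < lam) (hlam1 : lam < 1) :
    let γhat := if τ ≤ Real.log ((1 - lam) / lam) then Real.log ((1 - lam) / lam) - τ else 0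
    (∀ γ : ℝ, 0 ≤ γ →
      Real.log (1 + Real.exp (-τ - γhat)) + lam * γhat ≤
        Real.log (1 + Real.exp (-τ - γ)) + lam * γ) ∧
    Real.log (1 + Real.exp (-τ - γhat)) =
      (if τ ≤ Real.log ((1 - lam) / lam) then Real.log (1 + lam / (1 - lam))
       else Real.log (1 + Real.exp (-τ))) := by
  intro γhat
  have h1l : (0:ℝ) < 1 - lam := by linarith
  set c : ℝ := lam / (1 - lam) with hc
  have hcpos : 0 < c := by positivity
  set L : ℝ := Real.log ((1 - lam) / lam) with hL
  have heL : Real.exp (-L) = c := by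
    rw [hL, ← Real.log_inv, Real.exp_log (by positivity), hc, inv_div]
  have h1c : (0:ℝ) < 1 + c := by linarith
  have hlamc : lam = c / (1 + c) := by
    rw [eq_div_iff (ne_of_gt h1c), hc]; field_simp; ring
  by_cases hcase : τ ≤ L
  · have hγhat : γhat = L - τ := if_pos hcase
    have hexp : Real.exp (-τ - γhat) = c := by
      rw [hγhat, show -τ - (L - τ) = -L by ring, heL]
    constructor
    · intro γ hγ
      have hsub : Real.exp (-τ - γ) = c * Real.exp (-(τ + γ - L)) := by
        rw [← heL, ← Real.exp_add]; congr 1; ring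
      rw [hexp, hsub, hγhat]
      have := key_log c (τ + γ - L) hcpos
      rw [← hlamc] at this
      linarith
    · rw [if_pos hcase, hexp]
  · have hγhat : γhat = 0 := if_neg hcase
    have hexp0 : -τ - γhat = -τ := by rw [hγhat]; ring
    constructor
    · intro γ hγ
      rw [hexp0, hγhat, mul_zero, add_zero]
      set a : ℝ := Real.exp (-τ) with ha
      have hapos : 0 < a := Real.exp_pos _
      have hac : a < c := by
        rw [ha, ← heL]
        exact Real.exp_lt_exp.2 (by push_neg at hcase; linarith)
      have hθle : a / (1 + a) ≤ lam := by
        rw [hlamc]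
        rw [div_le_div_iff₀ (by linarith) (by linarith)]
        nlinarith
      have hsub : Real.exp (-τ - γ) = a * Real.exp (-γ) := by
        rw [ha, ← Real.exp_add]; congr 1
      rw [hsub]
      have hk := key_log a γ hapos
      have : a / (1 + a) * γ ≤ lam * γ := mul_le_mul_of_nonneg_right hθle hγ
      linarith
    · rw [if_neg hcase, hexp0]
end

section
/- The effective quantile loss ρ_q^γ with parameter λ satisfies the bounds ρ_q(r) - q(1-q)/(2λ) ≤ ρ_q^γ(r) ≤ ρ_q(r) for all r ∈ ℝ; in particular ρ_q^γ converges uniformly to the check loss ρ_q as λ → ∞. -/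
lemma eff_bounds (q : ℝ) (hq : q ∈ Set.Ioo (0:ℝ) 1) (lam : ℝ) (hl : 0 < lam) (r : ℝ) :
    checkLoss q r - q * (1 - q) / (2 * lam) ≤ effCheckLoss q lam r ∧
      effCheckLoss q lam r ≤ checkLoss q r := by
  obtain ⟨hq0, hq1⟩ := hq
  have hq1' : 0 < 1 - q := by linarith
  unfold checkLoss effCheckLoss
  have hc : 0 ≤ q * (1 - q) / (2 * lam) := by positivity
  rcases lt_or_ge r (-q / lam) with h1 | h1
  · have hr : r < 0 := by
      have : -q / lam < 0 := by
        apply div_neg_of_neg_of_pos <;> linarith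
      linarith
    rw [if_pos h1, if_neg (not_le.mpr hr)]
    constructor <;> linarith
  · rw [if_neg (not_lt.mpr h1)]
    have h1' : -q ≤ lam * r := by
      rw [div_le_iff₀ hl] at h1; linarith [h1]
    rcases lt_or_ge r 0 with h2 | h2
    · rw [if_pos h2, if_neg (not_le.mpr h2)]
      have k1 : lam / 2 * ((1 - q) / q) * r ^ 2 - ((q - 1) * r - q * (1 - q) / (2 * lam)) =
          ((1 - q) / (2 * lam * q)) * (lam * r + q) ^ 2 := by field_simp; ring
      have k2 : (q - 1) * r - lam / 2 * ((1 - q) / q) * r ^ 2 =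
          ((1 - q) / (2 * q)) * ((-r) * (2 * q + lam * r)) := by field_simp; ring
      constructor
      · nlinarith [mul_nonneg (by positivity : (0:ℝ) ≤ (1 - q) / (2 * lam * q))
          (sq_nonneg (lam * r + q))]
      · nlinarith [mul_nonneg (by positivity : (0:ℝ) ≤ (1 - q) / (2 * q))
          (mul_nonneg (by linarith : (0:ℝ) ≤ -r) (by linarith : (0:ℝ) ≤ 2 * q + lam * r))]
    · rw [if_neg (not_lt.mpr h2), if_pos h2]
      rcases lt_or_ge r ((1 - q) / lam) with h3 | h3
      · rw [if_pos h3]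
        have h3' : lam * r ≤ 1 - q := by
          rw [lt_div_iff₀ hl] at h3; linarith [h3]
        have k1 : lam / 2 * (q / (1 - q)) * r ^ 2 - (q * r - q * (1 - q) / (2 * lam)) =
            (q / (2 * lam * (1 - q))) * (lam * r - (1 - q)) ^ 2 := by field_simp; ring
        have k2 : q * r - lam / 2 * (q / (1 - q)) * r ^ 2 =
            (q / (2 * (1 - q))) * (r * (2 * (1 - q) - lam * r)) := by field_simp
        constructor
        · nlinarith [mul_nonneg (by positivity : (0:ℝ) ≤ q / (2 * lam * (1 - q)))
            (sq_nonneg (lam * r - (1 - q)))]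
        · nlinarith [mul_nonneg (by positivity : (0:ℝ) ≤ q / (2 * (1 - q)))
            (mul_nonneg h2 (by linarith : (0:ℝ) ≤ 2 * (1 - q) - lam * r))]
      · rw [if_neg (not_lt.mpr h3)]
        constructor <;> linarith

/-- Bounds `ρ_q(r) - q(1-q)/(2λ) ≤ ρ_q^γ(r) ≤ ρ_q(r)`, and uniform convergence of
the effective quantile loss to the check loss as `λ → ∞`. -/
theorem effective_quantile_loss_bounds (q : ℝ) (hq : q ∈ Set.Ioo (0:ℝ) 1) :
    (∀ lam : ℝ, 0 < lam → ∀ r : ℝ,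
      checkLoss q r - q * (1 - q) / (2 * lam) ≤ effCheckLoss q lam r ∧
      effCheckLoss q lam r ≤ checkLoss q r) ∧
    TendstoUniformly (fun lam r => effCheckLoss q lam r) (checkLoss q) Filter.atTop := by
  obtain ⟨hq0, hq1⟩ := hq
  refine ⟨fun lam hl r => eff_bounds q ⟨hq0, hq1⟩ lam hl r, ?_⟩
  rw [Metric.tendstoUniformly_iff]
  intro ε hε
  filter_upwards [Filter.eventually_ge_atTop (max 1 (q * (1 - q) / ε))] with lam hlam
  intro r
  have hl1 : (1:ℝ) ≤ lam := le_trans (le_max_left _ _) hlam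
  have hl : 0 < lam := by linarith
  obtain ⟨hlo, hhi⟩ := eff_bounds q ⟨hq0, hq1⟩ lam hl r
  rw [Real.dist_eq, abs_sub_lt_iff]
  have key : q * (1 - q) / (2 * lam) < ε := by
    have h2 : q * (1 - q) / ε ≤ lam := le_trans (le_max_right _ _) hlam
    rw [div_le_iff₀ hε] at h2
    rw [div_lt_iff₀ (by positivity : (0:ℝ) < 2 * lam)]
    nlinarith
  constructor <;> [linarith; nlinarith [mul_pos (mul_pos hq0 (by linarith : (0:ℝ) < 1-q)) hl]]
end
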